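/- (Proposition 5.1(ii) of the paper, Kolmogorov pseudo-metric.) Let L > 0 and let u : T → ℝ be Lipschitz with modulus L with respect to the ℓ¹-norm, and let u_N be the Type-1 piecewise linear function built from the grid values u_{i,j} := u(x_i,y_j). Then d_I(u, u_N) ≤ 2L(β₁ + β₂), where β₁ := max_{1≤i≤N₁−1}(x_{i+1}−x_i) and β₂ := max_{1≤j≤N₂−1}(y_{j+1}−y_j). -/

import Mathlib

open Finset Set
open scoped Classical

noncomputable section

/-- Lower-triangle linear piece of the Type-1 PLA over cell `(i,j)`. -/
def u1l (x y : ℕ → ℝ) (u : ℕ → ℕ → ℝ) (i j : ℕ) (p q : ℝ) : ℝ :=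
  ((x (i + 1) - p) / (x (i + 1) - x i)) * u i j
    + ((p - x i) / (x (i + 1) - x i) - (q - y j) / (y (j + 1) - y j)) * u (i + 1) j
    + ((q - y j) / (y (j + 1) - y j)) * u (i + 1) (j + 1)

/-- Upper-triangle linear piece of the Type-1 PLA over cell `(i,j)`. -/
def u1u (x y : ℕ → ℝ) (u : ℕ → ℕ → ℝ) (i j : ℕ) (p q : ℝ) : ℝ :=
  ((y (j + 1) - q) / (y (j + 1) - y j)) * u i j
    + ((q - y j) / (y (j + 1) - y j) - (p - x i) / (x (i + 1) - x i)) * u i (j + 1)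
    + ((p - x i) / (x (i + 1) - x i)) * u (i + 1) (j + 1)

/-- Membership in the half-open interval `X_i` (closed at the left end for `i = 1`). -/
def memX (x : ℕ → ℝ) (i : ℕ) (p : ℝ) : Prop :=
  if i = 1 then x 1 ≤ p ∧ p ≤ x 2 else x i < p ∧ p ≤ x (i + 1)

/-- Membership in the cell `T_{i,j} = X_i × Y_j`. -/
def memCell (x y : ℕ → ℝ) (i j : ℕ) (p q : ℝ) : Prop :=
  memX x i p ∧ memX y j q

/-- The Type-1 piecewise linear function built from the grid values `u i j`. -/
def uPL (N₁ N₂ : ℕ) (x y : ℕ → ℝ) (u : ℕ → ℕ → ℝ) (p q : ℝ) : ℝ :=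
  ∑ i ∈ Finset.Icc 1 (N₁ - 1), ∑ j ∈ Finset.Icc 1 (N₂ - 1),
    if memCell x y i j p q then
      (if (q - y j) * (x (i + 1) - x i) ≤ (p - x i) * (y (j + 1) - y j)
        then u1l x y u i j p q else u1u x y u i j p q)
    else 0






lemma grid_mono (x : ℕ → ℝ) (N : ℕ) (hx : ∀ i, 1 ≤ i → i < N → x i < x (i + 1)) :
    ∀ a b, 1 ≤ a → a ≤ b → b ≤ N → x a ≤ x b := by
  intro a b ha hab hbN
  induction b with
  | zero => omega
  | succ n ih =>
    rcases Nat.eq_or_lt_of_le hab with h | h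
    · rw [h]
    · have h1 : a ≤ n := by omega
      have := ih h1 (by omega)
      exact this.trans (hx n (by omega) (by omega)).le

lemma memX_bounds (x : ℕ → ℝ) (i : ℕ) (p : ℝ) (h : memX x i p) :
    x i ≤ p ∧ p ≤ x (i + 1) := by
  unfold memX at h
  split at h
  · next hi => subst hi; exact ⟨h.1, h.2⟩
  · exact ⟨h.1.le, h.2⟩

lemma exists_memX (x : ℕ → ℝ) (N : ℕ) (hN : 2 ≤ N)
    (hx : ∀ i, 1 ≤ i → i < N → x i < x (i + 1)) (p : ℝ)
    (hp : p ∈ Set.Icc (x 1) (x N)) :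
    ∃ i, 1 ≤ i ∧ i ≤ N - 1 ∧ memX x i p := by
  by_cases hS : ∃ i ∈ Finset.Icc 1 (N - 1), x i < p
  · obtain ⟨i, hi, hlt⟩ := hS
    -- take the largest such i
    classical
    obtain ⟨m, hm, hmax⟩ := Finset.exists_max_image
      ((Finset.Icc 1 (N-1)).filter (fun i => x i < p)) id
      ⟨i, Finset.mem_filter.mpr ⟨hi, hlt⟩⟩
    simp only [Finset.mem_filter, Finset.mem_Icc] at hm
    refine ⟨m, hm.1.1, hm.1.2, ?_⟩
    have hub : p ≤ x (m + 1) := by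
      by_cases hlast : m = N - 1
      · have hmn : m + 1 = N := by omega
        rw [hmn]; exact hp.2
      · by_contra hc
        push_neg at hc
        have := hmax (m+1) (Finset.mem_filter.mpr ⟨Finset.mem_Icc.mpr ⟨by omega, by omega⟩, hc⟩)
        simp at this
    unfold memX
    split
    · next h1 => subst h1; exact ⟨hp.1, by simpa using hub⟩
    · exact ⟨hm.2, hub⟩
  · push_neg at hS
    refine ⟨1, le_rfl, by omega, ?_⟩
    have h1 : p ≤ x 1 := hS 1 (Finset.mem_Icc.mpr ⟨le_rfl, by omega⟩)
    have hp1 : p = x 1 := le_antisymm h1 hp.1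
    unfold memX
    simp only [if_pos rfl]
    refine ⟨hp.1, ?_⟩
    rw [hp1]
    exact grid_mono x N hx 1 2 le_rfl (by omega) hN

lemma memX_unique (x : ℕ → ℝ) (N : ℕ) (hx : ∀ i, 1 ≤ i → i < N → x i < x (i + 1))
    (i i' : ℕ) (hi : 1 ≤ i) (hi' : 1 ≤ i') (hiN : i ≤ N - 1) (hi'N : i' ≤ N - 1)
    (hN : 2 ≤ N) (p : ℝ) (h : memX x i p) (h' : memX x i' p) : i = i' := by
  have key : ∀ a b : ℕ, 1 ≤ a → a < b → b ≤ N - 1 → memX x a p → memX x b p → False := by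
    intro a b ha hab hbN hma hmb
    have h1 : p ≤ x (a + 1) := (memX_bounds x a p hma).2
    have h2 : x b < p := by
      unfold memX at hmb
      rw [if_neg (by omega)] at hmb
      exact hmb.1
    have h3 : x (a + 1) ≤ x b := grid_mono x N hx (a+1) b (by omega) (by omega) (by omega)
    linarith
  rcases lt_trichotomy i i' with h1 | h1 | h1
  · exact absurd (key i i' hi h1 hi'N h h') (by simp)
  · exact h1
  · exact absurd (key i' i hi' h1 hiN h' h) (by simp)



lemma comb_bound (L s t S D A B C : ℝ) (hL : 0 ≤ L)
    (hs0 : 0 ≤ s) (hs1 : s ≤ 1) (ht0 : 0 ≤ t) (hts : t ≤ s)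
    (hS : 0 < S) (hD : 0 < D)
    (hA : |A| ≤ L * (s * S + t * D))
    (hB : |B| ≤ L * ((1 - s) * S + t * D))
    (hC : |C| ≤ L * ((1 - s) * S + (1 - t) * D)) :
    |(1 - s) * A + (s - t) * B + t * C| ≤ 2 * L * (s * (1 - s) * S + t * (1 - t) * D) := by
  have h1 : |(1 - s) * A + (s - t) * B + t * C|
      ≤ (1 - s) * |A| + (s - t) * |B| + t * |C| := by
    calc |(1 - s) * A + (s - t) * B + t * C|
        ≤ |(1 - s) * A + (s - t) * B| + |t * C| := abs_add_le _ _
      _ ≤ |(1 - s) * A| + |(s - t) * B| + |t * C| := by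
          gcongr; exact abs_add_le _ _
      _ = (1 - s) * |A| + (s - t) * |B| + t * |C| := by
          rw [abs_mul (1 - s) A, abs_mul (s - t) B, abs_mul t C,
            abs_of_nonneg (show (0:ℝ) ≤ 1 - s by linarith),
            abs_of_nonneg (show (0:ℝ) ≤ s - t by linarith), abs_of_nonneg ht0]
  have h2 : (1 - s) * |A| + (s - t) * |B| + t * |C|
      ≤ (1 - s) * (L * (s * S + t * D)) + (s - t) * (L * ((1 - s) * S + t * D))
        + t * (L * ((1 - s) * S + (1 - t) * D)) := by
    gcongr <;> linarith
  have h3 : (1 - s) * (L * (s * S + t * D)) + (s - t) * (L * ((1 - s) * S + t * D))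
        + t * (L * ((1 - s) * S + (1 - t) * D))
      = 2 * L * (s * (1 - s) * S + t * (1 - t) * D) := by ring
  linarith

lemma piece_bound (L : ℝ) (hL : 0 ≤ L) (f : ℝ → ℝ → ℝ) (a b c d p q : ℝ)
    (hab : a < b) (hcd : c < d) (hpa : a ≤ p) (hpb : p ≤ b) (hqc : c ≤ q) (hqd : q ≤ d)
    (h00 : |f p q - f a c| ≤ L * (|p - a| + |q - c|))
    (h10 : |f p q - f b c| ≤ L * (|p - b| + |q - c|))
    (h01 : |f p q - f a d| ≤ L * (|p - a| + |q - d|))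
    (h11 : |f p q - f b d| ≤ L * (|p - b| + |q - d|)) :
    |f p q - (if (q - c) * (b - a) ≤ (p - a) * (d - c)
      then ((b - p) / (b - a)) * f a c
        + ((p - a) / (b - a) - (q - c) / (d - c)) * f b c + ((q - c) / (d - c)) * f b d
      else ((d - q) / (d - c)) * f a c
        + ((q - c) / (d - c) - (p - a) / (b - a)) * f a d + ((p - a) / (b - a)) * f b d)|
    ≤ 2 * L * ((p - a) * (b - p) / (b - a) + (q - c) * (d - q) / (d - c)) := by
  have hS : (0:ℝ) < b - a := by linarith
  have hD : (0:ℝ) < d - c := by linarith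
  set s : ℝ := (p - a) / (b - a) with hs
  set t : ℝ := (q - c) / (d - c) with ht
  have hs0 : 0 ≤ s := div_nonneg (by linarith) hS.le
  have hs1 : s ≤ 1 := by rw [hs, div_le_one hS]; linarith
  have ht0 : 0 ≤ t := div_nonneg (by linarith) hD.le
  have ht1 : t ≤ 1 := by rw [ht, div_le_one hD]; linarith
  have hpa' : p - a = s * (b - a) := by rw [hs, div_mul_cancel₀ _ hS.ne']
  have hpb' : b - p = (1 - s) * (b - a) := by nlinarith [hpa']
  have hqc' : q - c = t * (d - c) := by rw [ht, div_mul_cancel₀ _ hD.ne']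
  have hqd' : d - q = (1 - t) * (d - c) := by nlinarith [hqc']
  have habs1 : |p - a| = s * (b - a) := by rw [abs_of_nonneg (by linarith)]; exact hpa'
  have habs2 : |p - b| = (1 - s) * (b - a) := by
    rw [abs_of_nonpos (by linarith)]; linarith [hpb']
  have habs3 : |q - c| = t * (d - c) := by rw [abs_of_nonneg (by linarith)]; exact hqc'
  have habs4 : |q - d| = (1 - t) * (d - c) := by
    rw [abs_of_nonpos (by linarith)]; linarith [hqd']
  have hRHS : (p - a) * (b - p) / (b - a) + (q - c) * (d - q) / (d - c)
      = s * (1 - s) * (b - a) + t * (1 - t) * (d - c) := by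
    rw [hpa', hpb', hqc', hqd']
    field_simp
  rw [hRHS]
  split
  · next hcond =>
    have hts : t ≤ s := by
      rw [ht, hs, div_le_div_iff₀ hD hS]
      linarith [hcond]
    have e1 : (b - p) / (b - a) = 1 - s := by
      rw [hs, eq_sub_iff_add_eq, ← add_div, div_eq_one_iff_eq hS.ne']
      ring
    have key : f p q - (((b - p) / (b - a)) * f a c + (s - t) * f b c + t * f b d)
        = (1 - s) * (f p q - f a c) + (s - t) * (f p q - f b c) + t * (f p q - f b d) := by
      rw [e1]; ring
    rw [key]
    apply comb_bound L s t (b - a) (d - c) _ _ _ hL hs0 hs1 ht0 hts hS hD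
    · rw [habs1, habs3] at h00; exact h00
    · rw [habs2, habs3] at h10; exact h10
    · rw [habs2, habs4] at h11; exact h11
  · next hcond =>
    have hst : s ≤ t := by
      rw [ht, hs, div_le_div_iff₀ hS hD]
      nlinarith [hcond]
    have e1 : (d - q) / (d - c) = 1 - t := by
      rw [ht, eq_sub_iff_add_eq, ← add_div, div_eq_one_iff_eq hD.ne']
      ring
    have key : f p q - (((d - q) / (d - c)) * f a c + (t - s) * f a d + s * f b d)
        = (1 - t) * (f p q - f a c) + (t - s) * (f p q - f a d) + s * (f p q - f b d) := by
      rw [e1]; ring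
    rw [key]
    have := comb_bound L t s (d - c) (b - a) (f p q - f a c) (f p q - f a d)
      (f p q - f b d) hL ht0 ht1 hs0 hst hD hS
      (by rw [habs1, habs3] at h00; linarith [h00])
      (by rw [habs1, habs4] at h01; linarith [h01])
      (by rw [habs2, habs4] at h11; linarith [h11])
    linarith [this]


lemma uPL_eval (N₁ N₂ : ℕ) (x y : ℕ → ℝ) (g : ℕ → ℕ → ℝ)
    (hx : ∀ i, 1 ≤ i → i < N₁ → x i < x (i + 1))
    (hy : ∀ j, 1 ≤ j → j < N₂ → y j < y (j + 1))
    (hN₁ : 2 ≤ N₁) (hN₂ : 2 ≤ N₂)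
    (i j : ℕ) (hi : 1 ≤ i) (hiN : i ≤ N₁ - 1) (hj : 1 ≤ j) (hjN : j ≤ N₂ - 1)
    (p q : ℝ) (hc : memCell x y i j p q) :
    uPL N₁ N₂ x y g p q =
      if (q - y j) * (x (i + 1) - x i) ≤ (p - x i) * (y (j + 1) - y j)
        then u1l x y g i j p q else u1u x y g i j p q := by
  unfold uPL
  rw [Finset.sum_eq_single_of_mem i (Finset.mem_Icc.mpr ⟨hi, hiN⟩)]
  · rw [Finset.sum_eq_single_of_mem j (Finset.mem_Icc.mpr ⟨hj, hjN⟩)]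
    · rw [if_pos hc]
    · intro j' hj' hne
      rw [if_neg]
      intro hc'
      exact hne (memX_unique y N₂ hy j' j (Finset.mem_Icc.mp hj').1 hj
        (Finset.mem_Icc.mp hj').2 hjN hN₂ q hc'.2 hc.2)
  · intro i' hi' hne
    apply Finset.sum_eq_zero
    intro j' _
    rw [if_neg]
    intro hc'
    exact hne (memX_unique x N₁ hx i' i (Finset.mem_Icc.mp hi').1 hi
      (Finset.mem_Icc.mp hi').2 hiN hN₁ p hc'.1 hc.1)

lemma pt_bound (N₁ N₂ : ℕ) (hN₁ : 2 ≤ N₁) (hN₂ : 2 ≤ N₂)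
    (x y : ℕ → ℝ)
    (hx : ∀ i, 1 ≤ i → i < N₁ → x i < x (i + 1))
    (hy : ∀ j, 1 ≤ j → j < N₂ → y j < y (j + 1))
    (L : ℝ) (hL : 0 < L)
    (u : ℝ → ℝ → ℝ)
    (hlip : ∀ p p' q q', p ∈ Set.Icc (x 1) (x N₁) → p' ∈ Set.Icc (x 1) (x N₁) →
      q ∈ Set.Icc (y 1) (y N₂) → q' ∈ Set.Icc (y 1) (y N₂) →
      |u p q - u p' q'| ≤ L * (|p - p'| + |q - q'|))
    (β₁ β₂ : ℝ)
    (hβ₁ : ∀ i, 1 ≤ i → i ≤ N₁ - 1 → x (i + 1) - x i ≤ β₁)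
    (hβ₂ : ∀ j, 1 ≤ j → j ≤ N₂ - 1 → y (j + 1) - y j ≤ β₂)
    (p q : ℝ) (hp : p ∈ Set.Icc (x 1) (x N₁)) (hq : q ∈ Set.Icc (y 1) (y N₂)) :
    |u p q - uPL N₁ N₂ x y (fun i j => u (x i) (y j)) p q|
      ≤ L * ((if p = x 1 then 0 else β₁) + (if q = y 1 then 0 else β₂)) := by
  obtain ⟨i, hi, hiN, hmi⟩ := exists_memX x N₁ hN₁ hx p hp
  obtain ⟨j, hj, hjN, hmj⟩ := exists_memX y N₂ hN₂ hy q hq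
  have hxb := memX_bounds x i p hmi
  have hyb := memX_bounds y j q hmj
  have hab : x i < x (i + 1) := hx i hi (by omega)
  have hcd : y j < y (j + 1) := hy j hj (by omega)
  -- corners are in T
  have hx1i : x 1 ≤ x i := grid_mono x N₁ hx 1 i le_rfl hi (by omega)
  have hxiN : x (i + 1) ≤ x N₁ := grid_mono x N₁ hx (i + 1) N₁ (by omega) (by omega) le_rfl
  have hy1j : y 1 ≤ y j := grid_mono y N₂ hy 1 j le_rfl hj (by omega)
  have hyjN : y (j + 1) ≤ y N₂ := grid_mono y N₂ hy (j + 1) N₂ (by omega) (by omega) le_rfl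
  have hmxa : x i ∈ Set.Icc (x 1) (x N₁) := ⟨hx1i, by linarith⟩
  have hmxb : x (i + 1) ∈ Set.Icc (x 1) (x N₁) := ⟨by linarith, hxiN⟩
  have hmyc : y j ∈ Set.Icc (y 1) (y N₂) := ⟨hy1j, by linarith⟩
  have hmyd : y (j + 1) ∈ Set.Icc (y 1) (y N₂) := ⟨by linarith, hyjN⟩
  rw [uPL_eval N₁ N₂ x y _ hx hy hN₁ hN₂ i j hi hiN hj hjN p q ⟨hmi, hmj⟩]
  have key := piece_bound L hL.le u (x i) (x (i + 1)) (y j) (y (j + 1)) p q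
    hab hcd hxb.1 hxb.2 hyb.1 hyb.2
    (hlip p (x i) q (y j) hp hmxa hq hmyc)
    (hlip p (x (i + 1)) q (y j) hp hmxb hq hmyc)
    (hlip p (x i) q (y (j + 1)) hp hmxa hq hmyd)
    (hlip p (x (i + 1)) q (y (j + 1)) hp hmxb hq hmyd)
  have hgoal_eq : (if (q - y j) * (x (i + 1) - x i) ≤ (p - x i) * (y (j + 1) - y j)
        then u1l x y (fun i j => u (x i) (y j)) i j p q
        else u1u x y (fun i j => u (x i) (y j)) i j p q)
      = (if (q - y j) * (x (i + 1) - x i) ≤ (p - x i) * (y (j + 1) - y j)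
      then ((x (i+1) - p) / (x (i+1) - x i)) * u (x i) (y j)
        + ((p - x i) / (x (i+1) - x i) - (q - y j) / (y (j+1) - y j)) * u (x (i+1)) (y j)
        + ((q - y j) / (y (j+1) - y j)) * u (x (i+1)) (y (j+1))
      else ((y (j+1) - q) / (y (j+1) - y j)) * u (x i) (y j)
        + ((q - y j) / (y (j+1) - y j) - (p - x i) / (x (i+1) - x i)) * u (x i) (y (j+1))
        + ((p - x i) / (x (i+1) - x i)) * u (x (i+1)) (y (j+1))) := by
    simp only [u1l, u1u]
  rw [hgoal_eq]
  refine key.trans ?_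
  have ht1 : 2 * L * ((p - x i) * (x (i + 1) - p) / (x (i + 1) - x i))
      ≤ L * (if p = x 1 then 0 else β₁) := by
    by_cases hp1 : p = x 1
    · have hieq : i = 1 := by
        by_contra h
        have h2 : 2 ≤ i := by omega
        unfold memX at hmi
        rw [if_neg (by omega)] at hmi
        have : x 1 ≤ x i := hx1i
        linarith [hmi.1, hp1 ▸ this]
      rw [if_pos hp1]
      have : p - x i = 0 := by rw [hp1, hieq]; ring
      rw [this]
      simp
    · rw [if_neg hp1]
      have hβ : x (i + 1) - x i ≤ β₁ := hβ₁ i hi hiN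
      have h1 : (p - x i) * (x (i + 1) - p) / (x (i + 1) - x i) ≤ (x (i + 1) - x i) / 2 := by
        rw [div_le_div_iff₀ (by linarith) (by norm_num)]
        nlinarith [sq_nonneg ((p - x i) - (x (i + 1) - p))]
      nlinarith
  have ht2 : 2 * L * ((q - y j) * (y (j + 1) - q) / (y (j + 1) - y j))
      ≤ L * (if q = y 1 then 0 else β₂) := by
    by_cases hq1 : q = y 1
    · have hjeq : j = 1 := by
        by_contra h
        unfold memX at hmj
        rw [if_neg (by omega)] at hmj
        linarith [hmj.1, hq1 ▸ hy1j]
      rw [if_pos hq1]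
      have : q - y j = 0 := by rw [hq1, hjeq]; ring
      rw [this]
      simp
    · rw [if_neg hq1]
      have hβ : y (j + 1) - y j ≤ β₂ := hβ₂ j hj hjN
      have h1 : (q - y j) * (y (j + 1) - q) / (y (j + 1) - y j) ≤ (y (j + 1) - y j) / 2 := by
        rw [div_le_div_iff₀ (by linarith) (by norm_num)]
        nlinarith [sq_nonneg ((q - y j) - (y (j + 1) - q))]
      nlinarith
  linarith [ht1, ht2]

/-- Proposition 5.1(ii): the Kolmogorov pseudo-metric `d_I` between an ℓ¹-Lipschitz function
`u` and its Type-1 piecewise linear approximation is at most `2L(β₁ + β₂)`; `d_I(u,v) ≤ c` is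
expressed by the equivalent pointwise bound on the difference of the cross-differences over
`[x₁,p] × [y₁,q]` for every `(p,q) ∈ T`. -/
theorem type1_PLA_kolmogorov_bound
    (N₁ N₂ : ℕ) (hN₁ : 2 ≤ N₁) (hN₂ : 2 ≤ N₂)
    (x y : ℕ → ℝ)
    (hx : ∀ i, 1 ≤ i → i < N₁ → x i < x (i + 1))
    (hy : ∀ j, 1 ≤ j → j < N₂ → y j < y (j + 1))
    (L : ℝ) (hL : 0 < L)
    (u : ℝ → ℝ → ℝ)
    (hlip : ∀ p p' q q', p ∈ Set.Icc (x 1) (x N₁) → p' ∈ Set.Icc (x 1) (x N₁) →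
      q ∈ Set.Icc (y 1) (y N₂) → q' ∈ Set.Icc (y 1) (y N₂) →
      |u p q - u p' q'| ≤ L * (|p - p'| + |q - q'|)) :
    let β₁ := (Finset.Icc 1 (N₁ - 1)).sup' (Finset.nonempty_Icc.mpr (by omega))
      (fun i => x (i + 1) - x i)
    let β₂ := (Finset.Icc 1 (N₂ - 1)).sup' (Finset.nonempty_Icc.mpr (by omega))
      (fun j => y (j + 1) - y j)
    let uN := uPL N₁ N₂ x y (fun i j => u (x i) (y j))
    ∀ p ∈ Set.Icc (x 1) (x N₁), ∀ q ∈ Set.Icc (y 1) (y N₂),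
      |(u p q - u p (y 1) - u (x 1) q + u (x 1) (y 1))
          - (uN p q - uN p (y 1) - uN (x 1) q + uN (x 1) (y 1))|
        ≤ 2 * L * (β₁ + β₂) := by
  intro β₁ β₂ uN p hp q hq
  have huN : uN = uPL N₁ N₂ x y (fun i j => u (x i) (y j)) := rfl
  have hβ₁ : ∀ i, 1 ≤ i → i ≤ N₁ - 1 → x (i + 1) - x i ≤ β₁ := fun i h1 h2 =>
    Finset.le_sup' (fun i => x (i + 1) - x i) (Finset.mem_Icc.mpr ⟨h1, h2⟩)
  have hβ₂ : ∀ j, 1 ≤ j → j ≤ N₂ - 1 → y (j + 1) - y j ≤ β₂ := fun j h1 h2 =>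
    Finset.le_sup' (fun j => y (j + 1) - y j) (Finset.mem_Icc.mpr ⟨h1, h2⟩)
  have hβ₁0 : 0 ≤ β₁ := le_trans (by linarith [hx 1 le_rfl (by omega)]) (hβ₁ 1 le_rfl (by omega))
  have hβ₂0 : 0 ≤ β₂ := le_trans (by linarith [hy 1 le_rfl (by omega)]) (hβ₂ 1 le_rfl (by omega))
  have hp1 : x 1 ∈ Set.Icc (x 1) (x N₁) :=
    ⟨le_rfl, grid_mono x N₁ hx 1 N₁ le_rfl (by omega) le_rfl⟩
  have hq1 : y 1 ∈ Set.Icc (y 1) (y N₂) :=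
    ⟨le_rfl, grid_mono y N₂ hy 1 N₂ le_rfl (by omega) le_rfl⟩
  have pb := pt_bound N₁ N₂ hN₁ hN₂ x y hx hy L hL u hlip β₁ β₂ hβ₁ hβ₂
  have hiteP : (if p = x 1 then (0:ℝ) else β₁) ≤ β₁ := by split_ifs <;> simp [hβ₁0]
  have hiteQ : (if q = y 1 then (0:ℝ) else β₂) ≤ β₂ := by split_ifs <;> simp [hβ₂0]
  have hA : |u p q - uN p q| ≤ L * (β₁ + β₂) := by
    rw [huN]
    exact (pb p q hp hq).trans (by nlinarith)
  have hB : |u p (y 1) - uN p (y 1)| ≤ L * β₁ := by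
    rw [huN]
    refine (pb p (y 1) hp hq1).trans ?_
    rw [if_pos rfl]
    nlinarith
  have hC : |u (x 1) q - uN (x 1) q| ≤ L * β₂ := by
    rw [huN]
    refine (pb (x 1) q hp1 hq).trans ?_
    rw [if_pos rfl]
    nlinarith
  have hD : |u (x 1) (y 1) - uN (x 1) (y 1)| ≤ 0 := by
    rw [huN]
    refine (pb (x 1) (y 1) hp1 hq1).trans ?_
    rw [if_pos rfl, if_pos rfl]
    simp
  have hsplit : (u p q - u p (y 1) - u (x 1) q + u (x 1) (y 1))
      - (uN p q - uN p (y 1) - uN (x 1) q + uN (x 1) (y 1))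
      = (u p q - uN p q) - (u p (y 1) - uN p (y 1)) - (u (x 1) q - uN (x 1) q)
        + (u (x 1) (y 1) - uN (x 1) (y 1)) := by ring
  rw [hsplit]
  calc |(u p q - uN p q) - (u p (y 1) - uN p (y 1)) - (u (x 1) q - uN (x 1) q)
        + (u (x 1) (y 1) - uN (x 1) (y 1))|
      ≤ |(u p q - uN p q) - (u p (y 1) - uN p (y 1)) - (u (x 1) q - uN (x 1) q)|
        + |u (x 1) (y 1) - uN (x 1) (y 1)| := abs_add_le _ _
    _ ≤ |(u p q - uN p q) - (u p (y 1) - uN p (y 1))| + |u (x 1) q - uN (x 1) q|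
        + |u (x 1) (y 1) - uN (x 1) (y 1)| := by
        gcongr
        exact abs_sub _ _
    _ ≤ |u p q - uN p q| + |u p (y 1) - uN p (y 1)| + |u (x 1) q - uN (x 1) q|
        + |u (x 1) (y 1) - uN (x 1) (y 1)| := by
        gcongr
        exact abs_sub _ _
    _ ≤ 2 * L * (β₁ + β₂) := by linarith

end
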